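/- If C is a Euclidean circle x₁² + x₂² = r² x₀² (r > 0), then for every point p on C the Frégier point of C at p equals the center [1,0,0]; hence the Frégier locus of a circle is a single point, its center. -/

import Mathlib

/-- Points of the real projective plane, given by homogeneous coordinates `[x₀, x₁, x₂]`. -/
abbrev PP := Fin 3 → ℝ

/-- Cross product: line joining two points / point of intersection of two lines. -/
def cross3 (a b : PP) : PP :=
  ![a 1 * b 2 - a 2 * b 1, a 2 * b 0 - a 0 * b 2, a 0 * b 1 - a 1 * b 0]

def dot3 (a b : PP) : ℝ := a 0 * b 0 + a 1 * b 1 + a 2 * b 2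

/-- `q`, `r`, `f` are collinear. -/
def Coll (q r f : PP) : Prop := dot3 (cross3 q r) f = 0

/-- Euclidean perpendicularity of the lines `pq` and `pr`
(standard inner product on directions in the affine chart `x₀ = 1`). -/
def EuclidPerp (p q r : PP) : Prop :=
  (q 1 * p 0 - p 1 * q 0) * (r 1 * p 0 - p 1 * r 0) +
    (q 2 * p 0 - p 2 * q 0) * (r 2 * p 0 - p 2 * r 0) = 0

/-- Hyperbolic perpendicularity of the lines `pq` and `pr`:
conjugacy with respect to the absolute conic `N : x₁² + x₂² = x₀²`
(a line is perpendicular to another iff it contains its pole w.r.t. `N`). -/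
def HypPerp (p q r : PP) : Prop :=
  -(cross3 p q 0 * cross3 p r 0) + cross3 p q 1 * cross3 p r 1 +
    cross3 p q 2 * cross3 p r 2 = 0

/-- Elliptic perpendicularity of the lines `pq` and `pr`:
conjugacy with respect to the absolute polarity `x₀² + x₁² + x₂²`. -/
def EllPerp (p q r : PP) : Prop :=
  dot3 (cross3 p q) (cross3 p r) = 0

/-- `f` lies on every chord `qr` of the conic `C` such that the legs `pq`, `pr`
are perpendicular (a right triangle inscribed in `C` with right angle at `p`). -/
def IsFregier (OnC : PP → Prop) (Perp : PP → PP → PP → Prop) (p f : PP) : Prop :=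
  ∀ q r : PP, OnC q → OnC r → cross3 p q ≠ 0 → cross3 p r ≠ 0 → Perp p q r →
    Coll q r f

/-- `f` is THE Frégier point of the conic `C` at `p`: the common point of the
hypotenuses of all right triangles inscribed in `C` with right angle at `p`
(unique up to scalar). -/
def IsFregierPoint (OnC : PP → Prop) (Perp : PP → PP → PP → Prop) (p f : PP) : Prop :=
  f ≠ 0 ∧ IsFregier OnC Perp p f ∧
    ∀ f' : PP, f' ≠ 0 → IsFregier OnC Perp p f' → ∃ t : ℝ, t ≠ 0 ∧ f' = t • f

/-- The Frégier locus of a conic: all Frégier points as `p` varies on the conic. -/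
def FregierLocus (OnC : PP → Prop) (Perp : PP → PP → PP → Prop) : Set PP :=
  { f | ∃ p : PP, p ≠ 0 ∧ OnC p ∧ IsFregierPoint OnC Perp p f }

/-- Thales, affine form: a right angle inscribed in a circle centered at the
origin subtends a chord through the origin. -/
lemma thales_affine (R a1 a2 b1 b2 c1 c2 : ℝ)
    (ha : a1 ^ 2 + a2 ^ 2 = R ^ 2) (hb : b1 ^ 2 + b2 ^ 2 = R ^ 2)
    (hc : c1 ^ 2 + c2 ^ 2 = R ^ 2)
    (hperp : (b1 - a1) * (c1 - a1) + (b2 - a2) * (c2 - a2) = 0)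
    (hu : (b1 - a1) ^ 2 + (b2 - a2) ^ 2 ≠ 0)
    (hv : (c1 - a1) ^ 2 + (c2 - a2) ^ 2 ≠ 0) :
    b1 * c2 - b2 * c1 = 0 := by
  set U := (b1 - a1) ^ 2 + (b2 - a2) ^ 2 with hU
  set V := (c1 - a1) ^ 2 + (c2 - a2) ^ 2 with hV
  have hX : (b1 - a1) * (c2 - a2) - (b2 - a2) * (c1 - a1) ≠ 0 := by
    intro h
    have hUV : U * V = 0 := by
      have : U * V = ((b1 - a1) * (c2 - a2) - (b2 - a2) * (c1 - a1)) ^ 2 +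
          ((b1 - a1) * (c1 - a1) + (b2 - a2) * (c2 - a2)) ^ 2 := by
        rw [hU, hV]; ring
      rw [this, h, hperp]; ring
    rcases mul_eq_zero.mp hUV with h' | h'
    · exact hu h'
    · exact hv h'
  have hGX : (b1 * c2 - b2 * c1) *
      ((b1 - a1) * (c2 - a2) - (b2 - a2) * (c1 - a1)) = 0 := by
    rw [hU] at hu; rw [hV] at hv
    linear_combination (V / 2) * hb - (V / 2 + U / 2) * ha + (U / 2) * hc -
      (a1 * (b1 - a1) + a2 * (b2 - a2) + a1 * (c1 - a1) + a2 * (c2 - a2) +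
        ((b1 - a1) * (c1 - a1) + (b2 - a2) * (c2 - a2))) * hperp
  exact (mul_eq_zero.mp hGX).resolve_right hX

/-- A nonzero point on the circle has nonzero `x₀`-coordinate. -/
lemma circle_x0_ne_zero (r : ℝ) (hr : 0 < r) (p : PP) (hp : p ≠ 0)
    (hpc : p 1 ^ 2 + p 2 ^ 2 = r ^ 2 * p 0 ^ 2) : p 0 ≠ 0 := by
  intro h0
  apply hp
  have h12 : p 1 ^ 2 + p 2 ^ 2 = 0 := by rw [hpc, h0]; ring
  have h1 : p 1 = 0 := by nlinarith [sq_nonneg (p 1), sq_nonneg (p 2)]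
  have h2 : p 2 = 0 := by nlinarith [sq_nonneg (p 1), sq_nonneg (p 2)]
  funext i
  fin_cases i <;> simp [h0, h1, h2]

/-- If the normalized affine points coincide, the cross product vanishes. -/
lemma cross3_eq_zero_of_prop (p q : PP) (hp0 : p 0 ≠ 0) (hq0 : q 0 ≠ 0)
    (h1 : q 1 / q 0 = p 1 / p 0) (h2 : q 2 / q 0 = p 2 / p 0) :
    cross3 p q = 0 := by
  have e1 : q 1 * p 0 = p 1 * q 0 := by
    field_simp at h1; linarith [h1]
  have e2 : q 2 * p 0 = p 2 * q 0 := by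
    field_simp at h2; linarith [h2]
  have e0 : p 1 * q 2 - p 2 * q 1 = 0 := by
    have := mul_left_cancel₀ hp0 (show p 0 * (p 1 * q 2 - p 2 * q 1) = p 0 * 0 by
      have : p 0 * (p 1 * q 2 - p 2 * q 1) =
          p 1 * (q 2 * p 0 - p 2 * q 0) - p 2 * (q 1 * p 0 - p 1 * q 0) := by ring
      rw [this, e1, e2]; ring)
    linarith [this]
  funext i
  fin_cases i <;> simp [cross3] <;> nlinarith [e0, e1, e2]

set_option maxHeartbeats 1600000 in
/-- The center `![1,0,0]` is a Frégier candidate at every point of the circle. -/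
lemma center_isFregier (r : ℝ) (hr : 0 < r) (p : PP) (hp : p ≠ 0)
    (hpc : p 1 ^ 2 + p 2 ^ 2 = r ^ 2 * p 0 ^ 2) :
    IsFregier (fun v => v 1 ^ 2 + v 2 ^ 2 = r ^ 2 * v 0 ^ 2) EuclidPerp p
      ![(1 : ℝ), 0, 0] := by
  intro q r' hqc hrc hpq hpr hperp
  have hp0 : p 0 ≠ 0 := circle_x0_ne_zero r hr p hp hpc
  have hq : q ≠ 0 := by
    intro h; apply hpq; rw [h]; funext i; fin_cases i <;> simp [cross3]
  have hr' : r' ≠ 0 := by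
    intro h; apply hpr; rw [h]; funext i; fin_cases i <;> simp [cross3]
  have hq0 : q 0 ≠ 0 := circle_x0_ne_zero r hr q hq hqc
  have hr0 : r' 0 ≠ 0 := circle_x0_ne_zero r hr r' hr' hrc
  have ha : (p 1 / p 0) ^ 2 + (p 2 / p 0) ^ 2 = r ^ 2 := by
    field_simp; linear_combination hpc
  have hb : (q 1 / q 0) ^ 2 + (q 2 / q 0) ^ 2 = r ^ 2 := by
    field_simp; linear_combination hqc
  have hc : (r' 1 / r' 0) ^ 2 + (r' 2 / r' 0) ^ 2 = r ^ 2 := by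
    field_simp; linear_combination hrc
  have hD : p 0 ^ 2 * (q 0 * r' 0) ≠ 0 :=
    mul_ne_zero (pow_ne_zero 2 hp0) (mul_ne_zero hq0 hr0)
  have hperp' : (q 1 / q 0 - p 1 / p 0) * (r' 1 / r' 0 - p 1 / p 0) +
      (q 2 / q 0 - p 2 / p 0) * (r' 2 / r' 0 - p 2 / p 0) = 0 := by
    have h := hperp
    unfold EuclidPerp at h
    have expand : ((q 1 / q 0 - p 1 / p 0) * (r' 1 / r' 0 - p 1 / p 0) +
        (q 2 / q 0 - p 2 / p 0) * (r' 2 / r' 0 - p 2 / p 0)) *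
        (p 0 ^ 2 * (q 0 * r' 0)) =
        (q 1 * p 0 - p 1 * q 0) * (r' 1 * p 0 - p 1 * r' 0) +
          (q 2 * p 0 - p 2 * q 0) * (r' 2 * p 0 - p 2 * r' 0) := by
      field_simp
    have : ((q 1 / q 0 - p 1 / p 0) * (r' 1 / r' 0 - p 1 / p 0) +
        (q 2 / q 0 - p 2 / p 0) * (r' 2 / r' 0 - p 2 / p 0)) *
        (p 0 ^ 2 * (q 0 * r' 0)) = 0 := by rw [expand, h]
    exact (mul_eq_zero.mp this).resolve_right hD
  have hu : (q 1 / q 0 - p 1 / p 0) ^ 2 + (q 2 / q 0 - p 2 / p 0) ^ 2 ≠ 0 := by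
    intro h
    have h1 : q 1 / q 0 = p 1 / p 0 := by
      nlinarith [sq_nonneg (q 1 / q 0 - p 1 / p 0), sq_nonneg (q 2 / q 0 - p 2 / p 0)]
    have h2 : q 2 / q 0 = p 2 / p 0 := by
      nlinarith [sq_nonneg (q 1 / q 0 - p 1 / p 0), sq_nonneg (q 2 / q 0 - p 2 / p 0)]
    exact hpq (cross3_eq_zero_of_prop p q hp0 hq0 h1 h2)
  have hv : (r' 1 / r' 0 - p 1 / p 0) ^ 2 + (r' 2 / r' 0 - p 2 / p 0) ^ 2 ≠ 0 := by
    intro h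
    have h1 : r' 1 / r' 0 = p 1 / p 0 := by
      nlinarith [sq_nonneg (r' 1 / r' 0 - p 1 / p 0), sq_nonneg (r' 2 / r' 0 - p 2 / p 0)]
    have h2 : r' 2 / r' 0 = p 2 / p 0 := by
      nlinarith [sq_nonneg (r' 1 / r' 0 - p 1 / p 0), sq_nonneg (r' 2 / r' 0 - p 2 / p 0)]
    exact hpr (cross3_eq_zero_of_prop p r' hp0 hr0 h1 h2)
  have hG : (q 1 / q 0) * (r' 2 / r' 0) - (q 2 / q 0) * (r' 1 / r' 0) = 0 :=
    thales_affine r (p 1 / p 0) (p 2 / p 0) (q 1 / q 0) (q 2 / q 0)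
      (r' 1 / r' 0) (r' 2 / r' 0) ha hb hc hperp' hu hv
  have hmain : q 1 * r' 2 - q 2 * r' 1 = 0 := by
    have expand : q 1 * r' 2 - q 2 * r' 1 =
        ((q 1 / q 0) * (r' 2 / r' 0) - (q 2 / q 0) * (r' 1 / r' 0)) * (q 0 * r' 0) := by
      field_simp
    rw [expand, hG, zero_mul]
  show dot3 (cross3 q r') ![(1 : ℝ), 0, 0] = 0
  simp [dot3, cross3]
  linarith [hmain]

theorem fregier_locus_of_circle_is_center
    (r : ℝ) (hr : 0 < r) :
    (∀ p f : PP, p ≠ 0 → p 1 ^ 2 + p 2 ^ 2 = r ^ 2 * p 0 ^ 2 →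
      IsFregierPoint (fun v => v 1 ^ 2 + v 2 ^ 2 = r ^ 2 * v 0 ^ 2) EuclidPerp p f →
      ∃ t : ℝ, t ≠ 0 ∧ f = t • ![(1 : ℝ), 0, 0]) ∧
    FregierLocus (fun v => v 1 ^ 2 + v 2 ^ 2 = r ^ 2 * v 0 ^ 2) EuclidPerp
      ⊆ { f : PP | ∃ t : ℝ, t ≠ 0 ∧ f = t • ![(1 : ℝ), 0, 0] } := by
  have center_ne : (![(1 : ℝ), 0, 0] : PP) ≠ 0 := by
    intro h
    have := congrFun h 0
    simp at this
  have main : ∀ p f : PP, p ≠ 0 → p 1 ^ 2 + p 2 ^ 2 = r ^ 2 * p 0 ^ 2 →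
      IsFregierPoint (fun v => v 1 ^ 2 + v 2 ^ 2 = r ^ 2 * v 0 ^ 2) EuclidPerp p f →
      ∃ t : ℝ, t ≠ 0 ∧ f = t • ![(1 : ℝ), 0, 0] := by
    intro p f hp hpc hf
    obtain ⟨hf0, hfF, hfu⟩ := hf
    obtain ⟨t, ht, heq⟩ := hfu ![(1 : ℝ), 0, 0] center_ne (center_isFregier r hr p hp hpc)
    refine ⟨t⁻¹, inv_ne_zero ht, ?_⟩
    rw [heq, smul_smul, inv_mul_cancel₀ ht, one_smul]
  refine ⟨main, ?_⟩
  rintro f ⟨p, hp, hpc, hfp⟩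
  exact main p f hp hpc hfp
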